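/- arXiv:1703.02218 — 7 statements merged into one kernel-verified Lean document; each statement's English description precedes it below -/
import Mathlib

section
/- Let D be a nonempty set, f, g bounded functions from D into the nonnegative reals, and α = sup{f(x) : x ∈ D}. Suppose that for every ε > 0 there exists δ > 0 such that for all x ∈ D, g(x) < δ implies f(x) < ε. Then there exists a nondecreasing bounded function γ : [0, α] → ℝ≥0 such that γ(f(x)) ≤ g(x) for all x ∈ D and γ(t) > 0 for all t ∈ (0, α]. -/
/-- (1) ⇒ (3) of Lemma 3.2: the ε-δ condition yields a
nondecreasing bounded γ : [0,α] → ℝ₊ with γ(f x) ≤ g x and γ > 0 on (0,α]. -/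
theorem stmt4 {D : Type*} [Nonempty D] (f g : D → ℝ)
    (hf0 : ∀ x, 0 ≤ f x) (hg0 : ∀ x, 0 ≤ g x)
    (hfb : BddAbove (Set.range f)) (hgb : BddAbove (Set.range g))
    (α : ℝ) (hα : α = sSup (Set.range f))
    (h : ∀ ε > (0:ℝ), ∃ δ > (0:ℝ), ∀ x, g x < δ → f x < ε) :
    ∃ γ : ℝ → ℝ,
      MonotoneOn γ (Set.Icc (0:ℝ) α) ∧
      (∀ t ∈ Set.Icc (0:ℝ) α, 0 ≤ γ t) ∧
      (∃ K, ∀ t ∈ Set.Icc (0:ℝ) α, γ t ≤ K) ∧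
      (∀ x, γ (f x) ≤ g x) ∧
      (∀ t ∈ Set.Ioc (0:ℝ) α, 0 < γ t) := by
  obtain ⟨K, hK⟩ := hgb
  have hK' : ∀ x, g x ≤ K := fun x => hK ⟨x, rfl⟩
  set S : ℝ → Set ℝ := fun t => insert (K + 1) (g '' {x | t ≤ f x}) with hS
  have hne : ∀ t, (S t).Nonempty := fun t => ⟨K + 1, Set.mem_insert _ _⟩
  have hbdd : ∀ t, BddBelow (S t) := by
    intro t
    refine ⟨0, ?_⟩
    rintro y (rfl | ⟨x, -, rfl⟩)
    · have x := Classical.arbitrary D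
      linarith [hg0 x, hK' x]
    · exact hg0 _
  refine ⟨fun t => sInf (S t), ?_, ?_, ⟨K + 1, ?_⟩, ?_, ?_⟩
  · intro s hs t ht hst
    apply csInf_le_csInf (hbdd s) (hne t)
    rintro y (rfl | ⟨x, hx, rfl⟩)
    · exact Set.mem_insert _ _
    · exact Set.mem_insert_of_mem _ ⟨x, le_trans hst hx, rfl⟩
  · intro t ht
    apply le_csInf (hne t)
    rintro y (rfl | ⟨x, -, rfl⟩)
    · have x := Classical.arbitrary D
      linarith [hg0 x, hK' x]
    · exact hg0 _
  · intro t ht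
    exact csInf_le (hbdd t) (Set.mem_insert _ _)
  · intro x
    exact csInf_le (hbdd (f x)) (Set.mem_insert_of_mem _ ⟨x, le_refl (f x), rfl⟩)
  · intro t ht
    obtain ⟨δ, hδ, hδ'⟩ := h t ht.1
    have : min δ (K + 1) ≤ sInf (S t) := by
      apply le_csInf (hne t)
      rintro y (rfl | ⟨x, hx, rfl⟩)
      · exact min_le_right _ _
      · refine le_trans (min_le_left _ _) ?_
        by_contra hc
        exact absurd (hδ' x (lt_of_not_ge hc)) (not_lt.2 hx)
    have hK1 : (0:ℝ) < K + 1 := by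
      have x := Classical.arbitrary D
      linarith [hg0 x, hK' x]
    exact lt_of_lt_of_le (lt_min hδ hK1) this
end

section
/- Let D be a nonempty set, f, g bounded functions from D into the nonnegative reals, and α = sup{f(x) : x ∈ D}. The following are equivalent: (1) for every ε > 0 there exists δ > 0 such that g(x) < δ implies f(x) < ε for all x ∈ D; (2) f(x_n) → 0 whenever (x_n) is a sequence in D with g(x_n) → 0; (3) there exists a nondecreasing bounded function γ : [0, α] → ℝ≥0 with γ(f(x)) ≤ g(x) for all x ∈ D and γ(t) > 0 for all t ∈ (0, α]. -/
/-- Lemma 3.2: equivalence of (1) the ε-δ condition, (2) the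
sequential condition, and (3) the existence of a modulus function γ. -/
theorem stmt5 {D : Type*} [Nonempty D] (f g : D → ℝ)
    (hf0 : ∀ x, 0 ≤ f x) (hg0 : ∀ x, 0 ≤ g x)
    (hfb : BddAbove (Set.range f)) (hgb : BddAbove (Set.range g))
    (α : ℝ) (hα : α = sSup (Set.range f)) :
    ((∀ ε > (0:ℝ), ∃ δ > (0:ℝ), ∀ x, g x < δ → f x < ε) ↔
      (∀ xs : ℕ → D,
        Filter.Tendsto (fun n => g (xs n)) Filter.atTop (nhds 0) →
        Filter.Tendsto (fun n => f (xs n)) Filter.atTop (nhds 0))) ∧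
    ((∀ ε > (0:ℝ), ∃ δ > (0:ℝ), ∀ x, g x < δ → f x < ε) ↔
      (∃ γ : ℝ → ℝ,
        MonotoneOn γ (Set.Icc (0:ℝ) α) ∧
        (∀ t ∈ Set.Icc (0:ℝ) α, 0 ≤ γ t) ∧
        (∃ K, ∀ t ∈ Set.Icc (0:ℝ) α, γ t ≤ K) ∧
        (∀ x, γ (f x) ≤ g x) ∧
        (∀ t ∈ Set.Ioc (0:ℝ) α, 0 < γ t))) := by
  have hfα : ∀ x, f x ≤ α := by
    intro x; rw [hα]; exact le_csSup hfb ⟨x, rfl⟩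
  constructor
  · -- (1) ↔ (2)
    constructor
    · intro h1 xs hgx
      rw [Metric.tendsto_atTop] at hgx ⊢
      intro ε hε
      obtain ⟨δ, hδ, hδ'⟩ := h1 ε hε
      obtain ⟨N, hN⟩ := hgx δ hδ
      refine ⟨N, fun n hn => ?_⟩
      have := hN n hn
      rw [Real.dist_eq, sub_zero, abs_of_nonneg (hg0 _)] at this
      rw [Real.dist_eq, sub_zero, abs_of_nonneg (hf0 _)]
      exact hδ' _ this
    · intro h2
      by_contra h1
      push_neg at h1
      obtain ⟨ε, hε, hεx⟩ := h1
      choose xs hxs hfxs using fun n : ℕ => hεx (1 / (n + 1)) (by positivity)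
      have hgx : Filter.Tendsto (fun n => g (xs n)) Filter.atTop (nhds 0) := by
        apply squeeze_zero (fun n => hg0 _) (fun n => le_of_lt (hxs n))
        exact tendsto_one_div_add_atTop_nhds_zero_nat
      have := h2 xs hgx
      rw [Metric.tendsto_atTop] at this
      obtain ⟨N, hN⟩ := this ε hε
      have := hN N le_rfl
      rw [Real.dist_eq, sub_zero, abs_of_nonneg (hf0 _)] at this
      exact absurd (hfxs N) (not_le.mpr this)
  · -- (1) ↔ (3)
    constructor
    · intro h1
      set K : ℝ := sSup (Set.range g) + 1 with hK
      have hK0 : 0 < K := by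
        have : (0:ℝ) ≤ sSup (Set.range g) := by
          obtain ⟨x0⟩ := ‹Nonempty D›
          exact le_trans (hg0 x0) (le_csSup hgb ⟨x0, rfl⟩)
        linarith
      set S : ℝ → Set ℝ := fun t => insert K (g '' {x | t ≤ f x}) with hS
      have hSne : ∀ t, (S t).Nonempty := fun t => ⟨K, Set.mem_insert _ _⟩
      have hSbdd : ∀ t, BddBelow (S t) := by
        intro t
        refine ⟨0, fun b hb => ?_⟩
        rcases hb with rfl | ⟨x, _, rfl⟩
        · exact le_of_lt hK0
        · exact hg0 x
      refine ⟨fun t => sInf (S t), ?_, ?_, ⟨K, ?_⟩, ?_, ?_⟩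
      · intro s _ t _ hst
        refine csInf_le_csInf (hSbdd s) (hSne t) ?_
        intro b hb
        rcases hb with rfl | ⟨x, hx, rfl⟩
        · exact Set.mem_insert _ _
        · exact Set.mem_insert_of_mem _ ⟨x, le_trans hst hx, rfl⟩
      · intro t _
        exact le_csInf (hSne t) (fun b hb => by
          rcases hb with rfl | ⟨x, _, rfl⟩
          · exact le_of_lt hK0
          · exact hg0 x)
      · intro t _
        exact csInf_le (hSbdd t) (Set.mem_insert _ _)
      · intro x
        exact csInf_le (hSbdd _) (Set.mem_insert_of_mem _ ⟨x, Set.mem_setOf_eq ▸ le_refl _, rfl⟩)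
      · intro t ht
        obtain ⟨δ, hδ, hδ'⟩ := h1 t ht.1
        have : min δ K ≤ sInf (S t) := by
          refine le_csInf (hSne t) (fun b hb => ?_)
          rcases hb with rfl | ⟨x, hx, rfl⟩
          · exact min_le_right _ _
          · refine le_trans (min_le_left _ _) ?_
            by_contra hc
            exact absurd hx (not_le.mpr (hδ' x (not_le.mp hc)))
        exact lt_of_lt_of_le (lt_min hδ hK0) this
    · rintro ⟨γ, hmono, _, _, hγg, hγpos⟩
      intro ε hε
      by_cases hεα : ε ≤ α
      · refine ⟨γ ε, hγpos ε ⟨hε, hεα⟩, fun x hx => ?_⟩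
        by_contra hc
        push_neg at hc
        have : γ ε ≤ γ (f x) :=
          hmono ⟨le_of_lt hε, hεα⟩ ⟨hf0 x, hfα x⟩ hc
        exact absurd (lt_of_le_of_lt (le_trans this (hγg x)) hx) (lt_irrefl _)
      · exact ⟨1, one_pos, fun x _ => lt_of_le_of_lt (hfα x) (not_le.mp hεα)⟩
end

section
/- Let X be a nonempty set and σ : X × X → ℝ≥0 satisfy conditions (S) and (B). Let C be a nonempty subset of X and T : C → X a mapping with nonempty fixed point set. Then T is strongly quasinonexpansive with respect to σ if and only if T is quasinonexpansive with respect to σ and σ(Tx_n, x_n) → 0 whenever (x_n) is a sequence in C ∩ B̄(z, M) with σ(z, x_n) − σ(z, Tx_n) → 0 for some fixed point z of T and some M > 0. -/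
/-- under conditions (S) and (B), T is strongly quasinonexpansive
w.r.t. σ iff T is quasinonexpansive and σ(Txₙ,xₙ) → 0 whenever (xₙ) lies in
C ∩ B̄(z,M) and σ(z,xₙ) - σ(z,Txₙ) → 0 for some fixed point z and M > 0. -/
theorem stmt8 {X : Type*} (σ : X → X → ℝ)
    (hσ0 : ∀ x y, 0 ≤ σ x y)
    (condS : ∀ x y : X, x ≠ y ↔ 0 < σ x y)
    (condB : ∀ z : X, ∀ M > (0:ℝ), ∃ K : ℝ,
      ∀ x, σ z x ≤ M → ∀ y, σ z y ≤ M → σ x y ≤ K)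
    (C : Set X) (hC : C.Nonempty) (T : X → X)
    (hF : ∃ z ∈ C, T z = z) :
    (∀ z ∈ C, T z = z → ∀ M > (0:ℝ), ∀ ε > (0:ℝ), ∃ δ > (0:ℝ),
        ∀ x ∈ C, σ z x ≤ M → σ z x - σ z (T x) < δ → σ (T x) x < ε) ↔
      ((∀ z ∈ C, T z = z → ∀ x ∈ C, σ z (T x) ≤ σ z x) ∧
        ∀ z ∈ C, T z = z → ∀ M > (0:ℝ), ∀ xs : ℕ → X,
          (∀ n, xs n ∈ C ∧ σ z (xs n) ≤ M) →
          Filter.Tendsto (fun n => σ z (xs n) - σ z (T (xs n)))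
            Filter.atTop (nhds 0) →
          Filter.Tendsto (fun n => σ (T (xs n)) (xs n))
            Filter.atTop (nhds 0)) := by
  constructor
  · intro h
    constructor
    · intro z hz hTz x hx
      by_contra hlt
      push_neg at hlt
      have hM : (0:ℝ) < σ z x + 1 := by nlinarith [hσ0 z x]
      have hfix : T x = x := by
        by_contra hne
        have hpos := (condS (T x) x).mp hne
        obtain ⟨δ, hδ, hδ'⟩ := h z hz hTz (σ z x + 1) hM (σ (T x) x) hpos
        have := hδ' x hx (by linarith) (by linarith)
        linarith
      rw [hfix] at hlt
      linarith
    · intro z hz hTz M hM xs hxs htend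
      rw [Metric.tendsto_atTop] at htend ⊢
      intro ε hε
      obtain ⟨δ, hδ, hδ'⟩ := h z hz hTz M hM ε hε
      obtain ⟨N, hN⟩ := htend δ hδ
      refine ⟨N, fun n hn => ?_⟩
      have h1 := hN n hn
      rw [Real.dist_eq, sub_zero] at h1 ⊢
      have h2 := hδ' (xs n) (hxs n).1 (hxs n).2 (lt_of_le_of_lt (le_abs_self _) h1)
      rwa [abs_of_nonneg (hσ0 _ _)]
  · rintro ⟨hq, hseq⟩ z hz hTz M hM ε hε
    by_contra hcon
    push_neg at hcon
    have key : ∀ n : ℕ, ∃ x, x ∈ C ∧ σ z x ≤ M ∧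
        σ z x - σ z (T x) < 1 / (n + 1) ∧ ε ≤ σ (T x) x := by
      intro n
      obtain ⟨x, hx, hx2⟩ := hcon (1 / (n + 1)) (by positivity)
      exact ⟨x, hx, hx2.1, hx2.2.1, hx2.2.2⟩
    choose xs hxsC hxsM hxsd hxse using key
    have htend : Filter.Tendsto (fun n => σ z (xs n) - σ z (T (xs n)))
        Filter.atTop (nhds 0) := by
      have hlo : ∀ n : ℕ, (0:ℝ) ≤ σ z (xs n) - σ z (T (xs n)) := fun n => by
        have := hq z hz hTz (xs n) (hxsC n); linarith
      have h1 : Filter.Tendsto (fun n : ℕ => 1 / ((n : ℝ) + 1))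
          Filter.atTop (nhds 0) := tendsto_one_div_add_atTop_nhds_zero_nat
      exact squeeze_zero hlo (fun n => (hxsd n).le) h1
    have := hseq z hz hTz M hM xs (fun n => ⟨hxsC n, hxsM n⟩) htend
    rw [Metric.tendsto_atTop] at this
    obtain ⟨N, hN⟩ := this ε hε
    have := hN N le_rfl
    rw [Real.dist_eq, sub_zero, abs_of_nonneg (hσ0 _ _)] at this
    linarith [hxse N]
end

section
/- Let X be a nonempty set, σ : X × X → ℝ≥0, C and D nonempty subsets of X, S : C → X and T : D → X quasinonexpansive mappings with respect to σ such that T(D) ⊆ C and F(S) ∩ F(T) is nonempty. If S or T is strictly quasinonexpansive with respect to σ, then F(S) ∩ F(T) = F(S∘T) and S∘T is quasinonexpansive with respect to σ. -/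
/-- if S, T are quasinonexpansive w.r.t. σ, T(D) ⊆ C,
F(S) ∩ F(T) ≠ ∅, and S or T is strictly quasinonexpansive, then
F(S) ∩ F(T) = F(S∘T) and S∘T is quasinonexpansive w.r.t. σ. -/
theorem stmt12 {X : Type*} (σ : X → X → ℝ)
    (hσ0 : ∀ x y, 0 ≤ σ x y)
    (C D : Set X) (hC : C.Nonempty) (hD : D.Nonempty)
    (S T : X → X)
    (hTD : ∀ x ∈ D, T x ∈ C)
    (hFS : ∃ z ∈ C, S z = z) (hFT : ∃ z ∈ D, T z = z)
    (hQS : ∀ z ∈ C, S z = z → ∀ x ∈ C, σ z (S x) ≤ σ z x)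
    (hQT : ∀ z ∈ D, T z = z → ∀ x ∈ D, σ z (T x) ≤ σ z x)
    (hFST : ∃ z, z ∈ C ∧ z ∈ D ∧ S z = z ∧ T z = z)
    (hstrict :
      (∀ z ∈ C, S z = z → ∀ x ∈ C, S x ≠ x → σ z (S x) < σ z x) ∨
      (∀ z ∈ D, T z = z → ∀ x ∈ D, T x ≠ x → σ z (T x) < σ z x)) :
    (∀ z, (z ∈ D ∧ S (T z) = z) ↔ (z ∈ C ∧ z ∈ D ∧ S z = z ∧ T z = z)) ∧
    (∀ z ∈ D, S (T z) = z → ∀ x ∈ D, σ z (S (T x)) ≤ σ z x) := by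
  obtain ⟨w, hwC, hwD, hwS, hwT⟩ := hFST
  have key : ∀ z, z ∈ D → S (T z) = z → z ∈ C ∧ z ∈ D ∧ S z = z ∧ T z = z := by
    intro z hzD hz
    have hTzC : T z ∈ C := hTD z hzD
    have h1 : σ w (S (T z)) ≤ σ w (T z) := hQS w hwC hwS (T z) hTzC
    have h2 : σ w (T z) ≤ σ w z := hQT w hwD hwT z hzD
    have hTz : T z = z := by
      rcases hstrict with hS | hT
      · by_cases hfix : S (T z) = T z
        · rw [hz] at hfix; exact hfix.symm
        · exfalso
          have := hS w hwC hwS (T z) hTzC hfix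
          rw [hz] at this
          linarith
      · by_contra hne
        have := hT w hwD hwT z hzD hne
        rw [hz] at h1
        linarith
    have hSz : S z = z := by nth_rewrite 1 [← hTz]; exact hz
    exact ⟨hTz ▸ hTzC, hzD, hSz, hTz⟩
  constructor
  · intro z
    constructor
    · intro ⟨hzD, hz⟩; exact key z hzD hz
    · rintro ⟨_, hzD, hSz, hTz⟩
      exact ⟨hzD, by rw [hTz, hSz]⟩
  · intro z hzD hz x hxD
    obtain ⟨hzC, _, hSz, hTz⟩ := key z hzD hz
    calc σ z (S (T x)) ≤ σ z (T x) := hQS z hzC hSz (T x) (hTD x hxD)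
      _ ≤ σ z x := hQT z hzD hTz x hxD
end

section
/- Let X be a nonempty set and σ : X × X → ℝ≥0 satisfy conditions (S) and (T). Let C and D be nonempty subsets of X, and S : C → X and T : D → X strongly quasinonexpansive mappings with respect to σ such that T(D) ⊆ C and F(S) ∩ F(T) is nonempty. Then the composition S∘T : D → X is strongly quasinonexpansive with respect to σ. -/
/-- under conditions (S) and (T), the composition of two strongly
quasinonexpansive mappings (with common fixed point) is strongly
quasinonexpansive w.r.t. σ. -/
theorem stmt13 {X : Type*} (σ : X → X → ℝ)
    (hσ0 : ∀ x y, 0 ≤ σ x y)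
    (condS : ∀ x y : X, x ≠ y ↔ 0 < σ x y)
    (condT : ∀ u : X, ∀ M > (0:ℝ), ∀ ε > (0:ℝ), ∃ η > (0:ℝ),
      ∀ x y z : X, σ u x ≤ M → σ u y ≤ M → σ u z ≤ M →
        σ x y < η → σ y z < η → σ x z < ε)
    (C D : Set X) (hC : C.Nonempty) (hD : D.Nonempty)
    (S T : X → X)
    (hTD : ∀ x ∈ D, T x ∈ C)
    (hFS : ∃ z ∈ C, S z = z) (hFT : ∃ z ∈ D, T z = z)
    (hSQS : ∀ z ∈ C, S z = z → ∀ M > (0:ℝ), ∀ ε > (0:ℝ), ∃ δ > (0:ℝ),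
      ∀ x ∈ C, σ z x ≤ M → σ z x - σ z (S x) < δ → σ (S x) x < ε)
    (hSQT : ∀ z ∈ D, T z = z → ∀ M > (0:ℝ), ∀ ε > (0:ℝ), ∃ δ > (0:ℝ),
      ∀ x ∈ D, σ z x ≤ M → σ z x - σ z (T x) < δ → σ (T x) x < ε)
    (hFST : ∃ z, z ∈ C ∧ z ∈ D ∧ S z = z ∧ T z = z) :
    (∃ z ∈ D, S (T z) = z) ∧
    (∀ z ∈ D, S (T z) = z → ∀ M > (0:ℝ), ∀ ε > (0:ℝ), ∃ δ > (0:ℝ),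
      ∀ x ∈ D, σ z x ≤ M → σ z x - σ z (S (T x)) < δ →
        σ (S (T x)) x < ε) := by

  obtain ⟨w, hwC, hwD, hSw, hTw⟩ := hFST
  -- S and T are quasinonexpansive
  have qS : ∀ z ∈ C, S z = z → ∀ x ∈ C, σ z (S x) ≤ σ z x := by
    intro z hzC hz x hxC
    by_contra h
    push_neg at h
    have hne : S x ≠ x := by
      intro he; rw [he] at h; exact lt_irrefl _ h
    have hpos := (condS (S x) x).mp hne
    obtain ⟨δ, hδ, hd⟩ := hSQS z hzC hz (σ z x + 1) (by linarith [hσ0 z x])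
      (σ (S x) x) hpos
    have := hd x hxC (by linarith [hσ0 z x]) (by linarith)
    linarith
  have qT : ∀ z ∈ D, T z = z → ∀ x ∈ D, σ z (T x) ≤ σ z x := by
    intro z hzD hz x hxD
    by_contra h
    push_neg at h
    have hne : T x ≠ x := by
      intro he; rw [he] at h; exact lt_irrefl _ h
    have hpos := (condS (T x) x).mp hne
    obtain ⟨δ, hδ, hd⟩ := hSQT z hzD hz (σ z x + 1) (by linarith [hσ0 z x])
      (σ (T x) x) hpos
    have := hd x hxD (by linarith [hσ0 z x]) (by linarith)
    linarith
  constructor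
  · exact ⟨w, hwD, by rw [hTw, hSw]⟩
  · intro z hzD hz M hM ε hε
    -- z is a common fixed point
    have h1 : σ w (T z) ≤ σ w z := qT w hwD hTw z hzD
    have h2 : σ w (S (T z)) ≤ σ w (T z) := qS w hwC hSw (T z) (hTD z hzD)
    rw [hz] at h2
    have hTz : T z = z := by
      by_contra hne
      have hpos := (condS (T z) z).mp hne
      obtain ⟨δ, hδ, hd⟩ := hSQT w hwD hTw (σ w z + 1) (by linarith [hσ0 w z])
        (σ (T z) z) hpos
      have := hd z hzD (by linarith [hσ0 w z]) (by linarith)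
      linarith
    have hSz : S z = z := by
      calc S z = S (T z) := by rw [hTz]
        _ = z := hz
    have hzC : z ∈ C := hTz ▸ hTD z hzD
    obtain ⟨η, hη, hcond⟩ := condT z M hM ε hε
    have hε' : (0:ℝ) < min η ε := lt_min hη hε
    obtain ⟨δ₁, hδ₁, hd1⟩ := hSQS z hzC hSz M hM (min η ε) hε'
    obtain ⟨δ₂, hδ₂, hd2⟩ := hSQT z hzD hTz M hM (min η ε) hε'
    refine ⟨min δ₁ δ₂, lt_min hδ₁ hδ₂, ?_⟩
    intro x hxD hxM hxδ
    have hTxC := hTD x hxD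
    have q1 : σ z (T x) ≤ σ z x := qT z hzD hTz x hxD
    have q2 : σ z (S (T x)) ≤ σ z (T x) := qS z hzC hSz (T x) hTxC
    have e1 : σ (T x) x < min η ε := by
      refine hd2 x hxD hxM ?_
      have := min_le_right δ₁ δ₂
      linarith
    have e2 : σ (S (T x)) (T x) < min η ε := by
      refine hd1 (T x) hTxC (le_trans q1 hxM) ?_
      have := min_le_left δ₁ δ₂
      linarith
    exact hcond (S (T x)) (T x) x (le_trans (q2.trans q1) hxM)
      (le_trans q1 hxM) hxM (lt_of_lt_of_le e2 (min_le_left η ε))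
      (lt_of_lt_of_le e1 (min_le_left η ε))
end

section
/- Let X be a metric space, C and D nonempty subsets of X, and S : C → X, T : D → X strongly quasinonexpansive mappings such that T(D) ⊆ C and F(S) ∩ F(T) is nonempty. Then S∘T is strongly quasinonexpansive. -/
private lemma sqn_qn {X : Type*} [MetricSpace X] (P : Set X) (S : X → X)
    (h : ∀ z ∈ P, S z = z → ∀ M > (0:ℝ), ∀ ε > (0:ℝ), ∃ δ > (0:ℝ),
      ∀ x ∈ P, dist z x ≤ M → dist z x - dist z (S x) < δ →
        dist (S x) x < ε) :
    ∀ z ∈ P, S z = z → ∀ x ∈ P, dist z (S x) ≤ dist z x := by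
  intro z hz hzfix x hx
  by_contra hcon
  push_neg at hcon
  obtain ⟨δ, hδ, hδ'⟩ := h z hz hzfix (dist z x + 1) (by positivity)
    (dist z (S x) - dist z x) (by linarith)
  have := hδ' x hx (by linarith) (by linarith)
  have htri := dist_triangle z x (S x)
  rw [dist_comm (S x) x] at this
  linarith

private lemma sqn_near {X : Type*} [MetricSpace X] (P : Set X) (S : X → X)
    (h : ∀ z ∈ P, S z = z → ∀ M > (0:ℝ), ∀ ε > (0:ℝ), ∃ δ > (0:ℝ),
      ∀ x ∈ P, dist z x ≤ M → dist z x - dist z (S x) < δ →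
        dist (S x) x < ε)
    (z : X) (hz : z ∈ P) (hzfix : S z = z) (x : X) (hx : x ∈ P)
    (heq : dist z (S x) = dist z x) : S x = x := by
  by_contra hne
  obtain ⟨δ, hδ, hδ'⟩ := h z hz hzfix (dist z x + 1) (by positivity)
    (dist (S x) x) (dist_pos.2 hne)
  exact lt_irrefl _ (hδ' x hx (by linarith) (by linarith))

/-- in a metric space, the composition of two strongly
quasinonexpansive mappings with a common fixed point (and T(D) ⊆ C) is
strongly quasinonexpansive. -/
theorem stmt14 {X : Type*} [MetricSpace X]
    (C D : Set X) (hC : C.Nonempty) (hD : D.Nonempty)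
    (S T : X → X)
    (hTD : ∀ x ∈ D, T x ∈ C)
    (hFS : ∃ z ∈ C, S z = z) (hFT : ∃ z ∈ D, T z = z)
    (hSQS : ∀ z ∈ C, S z = z → ∀ M > (0:ℝ), ∀ ε > (0:ℝ), ∃ δ > (0:ℝ),
      ∀ x ∈ C, dist z x ≤ M → dist z x - dist z (S x) < δ →
        dist (S x) x < ε)
    (hSQT : ∀ z ∈ D, T z = z → ∀ M > (0:ℝ), ∀ ε > (0:ℝ), ∃ δ > (0:ℝ),
      ∀ x ∈ D, dist z x ≤ M → dist z x - dist z (T x) < δ →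
        dist (T x) x < ε)
    (hFST : ∃ z, z ∈ C ∧ z ∈ D ∧ S z = z ∧ T z = z) :
    (∃ z ∈ D, S (T z) = z) ∧
    (∀ z ∈ D, S (T z) = z → ∀ M > (0:ℝ), ∀ ε > (0:ℝ), ∃ δ > (0:ℝ),
      ∀ x ∈ D, dist z x ≤ M → dist z x - dist z (S (T x)) < δ →
        dist (S (T x)) x < ε) := by
  obtain ⟨z₀, hz₀C, hz₀D, hz₀S, hz₀T⟩ := hFST
  have qnS := sqn_qn C S hSQS
  have qnT := sqn_qn D T hSQT
  constructor
  · exact ⟨z₀, hz₀D, by rw [hz₀T, hz₀S]⟩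
  · intro z hzD hzfix M hM ε hε
    -- z is a common fixed point
    have hTz : T z = z := by
      have h1 : dist z₀ (T z) ≤ dist z₀ z := qnT z₀ hz₀D hz₀T z hzD
      have h2 : dist z₀ (S (T z)) ≤ dist z₀ (T z) :=
        qnS z₀ hz₀C hz₀S (T z) (hTD z hzD)
      rw [hzfix] at h2
      have hS : S (T z) = T z :=
        sqn_near C S hSQS z₀ hz₀C hz₀S (T z) (hTD z hzD) (by rw [hzfix]; linarith)
      exact hS.symm.trans hzfix
    have hSz : S z = z := by rw [hTz] at hzfix; exact hzfix
    have hzC' : z ∈ C := hTz ▸ hTD z hzD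
    obtain ⟨δS, hδS, hδS'⟩ := hSQS z hzC' hSz M hM (ε/2) (by linarith)
    obtain ⟨δT, hδT, hδT'⟩ := hSQT z hzD hTz M hM (ε/2) (by linarith)
    refine ⟨min δS δT, lt_min hδS hδT, fun x hxD hxM hxδ => ?_⟩
    have h1 : dist z (T x) ≤ dist z x := qnT z hzD hTz x hxD
    have h2 : dist z (S (T x)) ≤ dist z (T x) := qnS z hzC' hSz (T x) (hTD x hxD)
    have hT : dist (T x) x < ε/2 :=
      hδT' x hxD hxM (by have := min_le_right δS δT; linarith)
    have hS : dist (S (T x)) (T x) < ε/2 :=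
      hδS' (T x) (hTD x hxD) (by linarith) (by have := min_le_left δS δT; linarith)
    calc dist (S (T x)) x ≤ dist (S (T x)) (T x) + dist (T x) x := dist_triangle _ _ _
      _ < ε := by linarith
end

section
/- Let E be a smooth and uniformly convex Banach space and φ(x,y) = ‖x‖² − 2⟨x, Jy⟩ + ‖y‖². If (x_n), (y_n), (z_n) are sequences in B̄(u, M) for some u ∈ E and M > 0 with φ(x_n, y_n) → 0 and φ(y_n, z_n) → 0, then φ(x_n, z_n) → 0; i.e., (E, φ) satisfies condition (T). -/
open Filter

set_option maxHeartbeats 1000000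

/-- Quantitative Kamimura–Takahashi: in a uniformly convex space, if ‖a‖,‖b‖ ≤ R,
`f` is a norming functional for `b`, and ‖a - b‖ ≥ ε, then φ(a,b) is bounded below. -/
lemma stmt18_key {E : Type*} [NormedAddCommGroup E] [NormedSpace ℝ E]
    [UniformConvexSpace E] {ε R : ℝ} (hε : 0 < ε) (hR : 0 < R) :
    ∃ c > 0, ∀ (a b : E) (f : E →L[ℝ] ℝ), ‖a‖ ≤ R → ‖b‖ ≤ R →
      f b = ‖b‖ ^ 2 → ‖f‖ = ‖b‖ → ε ≤ ‖a - b‖ →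
      c ≤ ‖a‖ ^ 2 - 2 * f a + ‖b‖ ^ 2 := by
  obtain ⟨δ, hδ, hball⟩ :=
    exists_forall_closed_ball_dist_add_le_two_sub E (div_pos hε hR)
  set η : ℝ := min (ε / 4) (ε ^ 2 * δ / (32 * R)) with hη_def
  have hηpos : 0 < η := lt_min (by linarith) (by positivity)
  refine ⟨min (η ^ 2) (ε ^ 2 * δ / 32), lt_min (by positivity) (by positivity),
    fun a b f ha hb hfb hfn hab => ?_⟩
  set s := ‖a‖ with hs
  set t := ‖b‖ with ht
  have hs0 : 0 ≤ s := norm_nonneg a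
  have ht0 : 0 ≤ t := norm_nonneg b
  have hfa : f a ≤ t * s := by
    calc f a ≤ |f a| := le_abs_self _
    _ ≤ ‖f‖ * ‖a‖ := f.le_opNorm a
    _ = t * s := by rw [hfn]
  rcases le_or_gt η |s - t| with hcase | hcase
  · -- norms far apart
    have : η ^ 2 ≤ (s - t) ^ 2 := by
      have := sq_abs (s - t)
      nlinarith
    have : η ^ 2 ≤ s ^ 2 - 2 * f a + t ^ 2 := by nlinarith
    exact le_trans (min_le_left _ _) this
  · -- norms close; use uniform convexity
    have htε : ε / 4 ≤ t := by
      by_contra h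
      push_neg at h
      have habs : |s - t| < ε / 4 := lt_of_lt_of_le hcase (min_le_left _ _)
      have hsmall : ‖a - b‖ ≤ s + t := norm_sub_le a b
      have : s < ε / 2 := by cases abs_lt.mp habs; linarith
      linarith
    set r : ℝ := max s t with hr
    have hrt : t ≤ r := le_max_right _ _
    have hrs : s ≤ r := le_max_left _ _
    have hrpos : 0 < r := lt_of_lt_of_le (by linarith) hrt
    have hrR : r ≤ R := max_le ha hb
    -- apply uniform convexity to a/r, b/r
    have h1 : ‖(r⁻¹ : ℝ) • a‖ ≤ 1 := by
      rw [norm_smul, norm_inv, Real.norm_of_nonneg hrpos.le]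
      rw [inv_mul_le_iff₀ hrpos]; simpa using hrs
    have h2 : ‖(r⁻¹ : ℝ) • b‖ ≤ 1 := by
      rw [norm_smul, norm_inv, Real.norm_of_nonneg hrpos.le]
      rw [inv_mul_le_iff₀ hrpos]; simpa using hrt
    have h3 : ε / R ≤ ‖(r⁻¹ : ℝ) • a - (r⁻¹ : ℝ) • b‖ := by
      rw [← smul_sub, norm_smul, norm_inv, Real.norm_of_nonneg hrpos.le,
        ← div_eq_inv_mul]
      calc ε / R ≤ ‖a - b‖ / R := by gcongr
      _ ≤ ‖a - b‖ / r := by gcongr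
    have hsum := hball h1 h2 h3
    rw [← smul_add, norm_smul, norm_inv, Real.norm_of_nonneg hrpos.le] at hsum
    have habr : ‖a + b‖ ≤ r * (2 - δ) := by
      rw [inv_mul_le_iff₀ hrpos] at hsum
      linarith [hsum]
    -- f a = f (a + b) - t² ≤ t‖a+b‖ - t²
    have hfab : f (a + b) ≤ t * ‖a + b‖ := by
      calc f (a + b) ≤ |f (a + b)| := le_abs_self _
      _ ≤ ‖f‖ * ‖a + b‖ := f.le_opNorm _
      _ = t * ‖a + b‖ := by rw [hfn]
    have hfa2 : f a ≤ t * ‖a + b‖ - t ^ 2 := by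
      have : f (a + b) = f a + f b := map_add f a b
      rw [this, hfb] at hfab; linarith
    have hfa3 : f a ≤ t * (r * (2 - δ)) - t ^ 2 := by
      nlinarith [mul_le_mul_of_nonneg_left habr ht0]
    -- now pure arithmetic
    have hηb : η ≤ ε ^ 2 * δ / (32 * R) := min_le_right _ _
    have habs2 : |s - t| < η := hcase
    have hst1 : s - t < η := by cases abs_lt.mp habs2; linarith
    have hst2 : t - s < η := by cases abs_lt.mp habs2; linarith
    have hRη : R * η ≤ ε ^ 2 * δ / 32 := by
      have h5 : R * (ε ^ 2 * δ / (32 * R)) = ε ^ 2 * δ / 32 := by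
        field_simp
      calc R * η ≤ R * (ε ^ 2 * δ / (32 * R)) := by
            exact mul_le_mul_of_nonneg_left hηb hR.le
      _ = ε ^ 2 * δ / 32 := h5
    have key : ε ^ 2 * δ / 32 ≤ s ^ 2 - 2 * f a + t ^ 2 := by
      rcases max_cases s t with ⟨h1', hts⟩ | ⟨h1', hts⟩ <;> rw [hr, h1'] at hfa3
      · -- r = s, with t ≤ s
        have hA : ε / 4 ≤ s := le_trans htε hts
        have hp : ε / 4 * (ε / 4) ≤ t * s :=
          mul_le_mul htε hA (by positivity) ht0
        have hB : ε ^ 2 * δ / 8 ≤ 2 * (t * s) * δ := by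
          nlinarith [mul_nonneg hδ.le (sub_nonneg.mpr hp)]
        have hC : -(3 * R * η) ≤ (s - t) * (s - 3 * t) := by
          rcases le_or_gt 0 (s - 3 * t) with h' | h'
          · nlinarith
          · nlinarith [mul_nonneg (sub_nonneg.mpr hts) (by linarith : 0 ≤ 3 * R - (3 * t - s))]
        nlinarith
      · -- r = t, with s ≤ t
        have hp : ε / 4 * (ε / 4) ≤ t * t :=
          mul_le_mul htε htε (by positivity) ht0
        have hB : ε ^ 2 * δ / 8 ≤ 2 * (t * t) * δ := by
          nlinarith [mul_nonneg hδ.le (sub_nonneg.mpr hp)]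
        have hC : -(2 * R * η) ≤ (s - t) * (s + t) := by
          nlinarith [mul_nonneg (sub_nonneg.mpr hts.le) (by linarith : 0 ≤ s + t)]
        nlinarith
    exact le_trans (min_le_right _ _) key

/-- (E, φ) satisfies condition (T) in a smooth, uniformly convex
Banach space: if (xₙ), (yₙ), (zₙ) lie in a φ-ball B̄(u,M) and φ(xₙ,yₙ) → 0,
φ(yₙ,zₙ) → 0, then φ(xₙ,zₙ) → 0. -/
theorem stmt18 {E : Type*} [NormedAddCommGroup E] [NormedSpace ℝ E]
    [CompleteSpace E] [UniformConvexSpace E]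
    (J : E → (E →L[ℝ] ℝ))
    (hJ : ∀ x : E, J x x = ‖x‖ ^ 2 ∧ ‖J x‖ = ‖x‖)
    (u : E) (M : ℝ) (hM : 0 < M)
    (x y z : ℕ → E)
    (hx : ∀ n, ‖u‖ ^ 2 - 2 * J (x n) u + ‖x n‖ ^ 2 ≤ M)
    (hy : ∀ n, ‖u‖ ^ 2 - 2 * J (y n) u + ‖y n‖ ^ 2 ≤ M)
    (hz : ∀ n, ‖u‖ ^ 2 - 2 * J (z n) u + ‖z n‖ ^ 2 ≤ M)
    (hxy : Filter.Tendsto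
      (fun n => ‖x n‖ ^ 2 - 2 * J (y n) (x n) + ‖y n‖ ^ 2)
      Filter.atTop (nhds 0))
    (hyz : Filter.Tendsto
      (fun n => ‖y n‖ ^ 2 - 2 * J (z n) (y n) + ‖z n‖ ^ 2)
      Filter.atTop (nhds 0)) :
    Filter.Tendsto
      (fun n => ‖x n‖ ^ 2 - 2 * J (z n) (x n) + ‖z n‖ ^ 2)
      Filter.atTop (nhds 0) := by
  set R : ℝ := ‖u‖ + Real.sqrt M with hR_def
  have hsM : 0 < Real.sqrt M := Real.sqrt_pos.mpr hM
  have hRpos : 0 < R := by positivity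
  -- boundedness of the sequences
  have bound : ∀ (w : E), ‖u‖ ^ 2 - 2 * J w u + ‖w‖ ^ 2 ≤ M → ‖w‖ ≤ R := by
    intro w hw
    have h1 : (J w) u ≤ ‖w‖ * ‖u‖ := by
      calc (J w) u ≤ |(J w) u| := le_abs_self _
      _ ≤ ‖J w‖ * ‖u‖ := (J w).le_opNorm u
      _ = ‖w‖ * ‖u‖ := by rw [(hJ w).2]
    have h2 : (‖w‖ - ‖u‖) ^ 2 ≤ M := by nlinarith
    have h3 := Real.sq_sqrt hM.le
    nlinarith [Real.sqrt_nonneg M, norm_nonneg w, norm_nonneg u]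
  have hxR : ∀ n, ‖x n‖ ≤ R := fun n => bound _ (hx n)
  have hyR : ∀ n, ‖y n‖ ≤ R := fun n => bound _ (hy n)
  have hzR : ∀ n, ‖z n‖ ≤ R := fun n => bound _ (hz n)
  -- Kamimura–Takahashi: ‖x n - y n‖ → 0
  have hdiff : Filter.Tendsto (fun n => ‖x n - y n‖) Filter.atTop (nhds 0) := by
    rw [Metric.tendsto_atTop]
    intro ε hε
    obtain ⟨c, hc, hkey⟩ := stmt18_key (E := E) hε hRpos
    obtain ⟨N, hN⟩ := (Metric.tendsto_atTop.mp hxy) c hc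
    refine ⟨N, fun n hn => ?_⟩
    rw [Real.dist_eq, sub_zero, abs_of_nonneg (norm_nonneg _)]
    by_contra h
    push_neg at h
    have happ := hkey (x n) (y n) (J (y n)) (hxR n) (hyR n)
      (hJ (y n)).1 (hJ (y n)).2 h
    have h2 := hN n hn
    rw [Real.dist_eq, sub_zero] at h2
    have := le_abs_self (‖x n‖ ^ 2 - 2 * (J (y n)) (x n) + ‖y n‖ ^ 2)
    linarith
  -- correction terms tend to zero
  have hterm : ∀ (w : ℕ → E), (∀ n, ‖w n‖ ≤ R) →
      Filter.Tendsto (fun n => (J (w n)) (x n - y n)) Filter.atTop (nhds 0) := by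
    intro w hw
    refine squeeze_zero_norm (a := fun n => R * ‖x n - y n‖) (fun n => ?_) ?_
    · calc ‖(J (w n)) (x n - y n)‖ ≤ ‖J (w n)‖ * ‖x n - y n‖ := (J (w n)).le_opNorm _
      _ = ‖w n‖ * ‖x n - y n‖ := by rw [(hJ (w n)).2]
      _ ≤ R * ‖x n - y n‖ := by
          have := norm_nonneg (x n - y n); nlinarith [hw n]
    · simpa using hdiff.const_mul R
  have h3 := hterm y hyR
  have h4 := hterm z hzR
  have hsum := ((hxy.add hyz).add (h3.const_mul 2)).sub (h4.const_mul 2)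
  simp only [add_zero, sub_zero, mul_zero] at hsum
  convert hsum using 2 with n
  have e1 : (J (y n)) (x n - y n) = (J (y n)) (x n) - ‖y n‖ ^ 2 := by
    rw [map_sub, (hJ (y n)).1]
  have e2 : (J (z n)) (x n - y n) = (J (z n)) (x n) - (J (z n)) (y n) := map_sub _ _ _
  rw [e1, e2]
  ring
end
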